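/- Test-time error bound for mask substitution: under the assumptions below, $\mathrm{err}_{\mathrm{test}} := \mathbb{E}_q[v(f^*(p_q^\top V^*), i_q, p_q) - v(f(m_q^\top V), i_q, m_q)] \le L_v L_f (\epsilon_V + B_v(\epsilon_{\mathrm{sam}} + 2\sqrt{2\epsilon_{\mathrm{contrast}}})) + L_v \epsilon_{\mathrm{sam}} + \epsilon_f$. -/

import Mathlib

open Real MeasureTheory

noncomputable def gAux (t : ℝ) : ℝ :=
  2*(t*Real.log t - t + 1) + 2*((t+2)*Real.log t) - 6*(t-1)

noncomputable def hAux (t : ℝ) : ℝ :=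
  2*(t+2)*(t*Real.log t - t + 1) - 3*(t-1)^2

lemma hasDerivAt_mulLogAux {t : ℝ} (ht : 0 < t) :
    HasDerivAt (fun x : ℝ => x * Real.log x) (Real.log t + 1) t := by
  have := (hasDerivAt_id' t).mul (Real.hasDerivAt_log ht.ne')
  refine this.congr_deriv ?_
  field_simp

lemma hasDerivAt_gAux {t : ℝ} (ht : 0 < t) :
    HasDerivAt gAux (4*Real.log t + 4/t - 4) t := by
  have hl : HasDerivAt Real.log t⁻¹ t := Real.hasDerivAt_log ht.ne'
  have h2 : HasDerivAt (fun x : ℝ => x * Real.log x - x + 1) (Real.log t) t := by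
    simpa using ((hasDerivAt_mulLogAux ht).sub (hasDerivAt_id' t)).add_const 1
  have h3 : HasDerivAt (fun x : ℝ => (x+2) * Real.log x) (Real.log t + (t+2)*t⁻¹) t := by
    have := ((hasDerivAt_id' t).add_const 2).mul hl
    refine this.congr_deriv ?_
    field_simp
    try ring
  have H := ((h2.const_mul 2).add (h3.const_mul 2)).sub
    (((hasDerivAt_id' t).sub_const 1).const_mul 6)
  have hfun : gAux = fun x : ℝ =>
      2*(x*Real.log x - x + 1) + 2*((x+2)*Real.log x) - 6*(x-1) := rfl
  rw [hfun]
  refine H.congr_deriv ?_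
  field_simp
  ring

lemma hasDerivAt_hAux {t : ℝ} (ht : 0 < t) : HasDerivAt hAux (gAux t) t := by
  have h2 : HasDerivAt (fun x : ℝ => x * Real.log x - x + 1) (Real.log t) t := by
    simpa using ((hasDerivAt_mulLogAux ht).sub (hasDerivAt_id' t)).add_const 1
  have hc : HasDerivAt (fun x : ℝ => 2*(x+2)) 2 t := by
    simpa using ((hasDerivAt_id' t).add_const 2).const_mul 2
  have h4 : HasDerivAt (fun x : ℝ => 2*(x+2)*(x*Real.log x - x + 1))
      (2*(t*Real.log t - t + 1) + 2*((t+2)*Real.log t)) t := by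
    have := hc.mul h2
    refine this.congr_deriv ?_
    ring
  have h5 : HasDerivAt (fun x : ℝ => 3*(x-1)^2) (6*(t-1)) t := by
    have := (((hasDerivAt_id' t).sub_const 1).pow 2).const_mul 3
    refine this.congr_deriv ?_
    ring
  have H := h4.sub h5
  have hfun : hAux = fun x : ℝ =>
      2*(x+2)*(x*Real.log x - x + 1) - 3*(x-1)^2 := rfl
  rw [hfun]
  exact H

lemma gAux_one : gAux 1 = 0 := by unfold gAux; simp

lemma gAux_mono : MonotoneOn gAux (Set.Ioi 0) := by
  apply monotoneOn_of_deriv_nonneg (convex_Ioi 0)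
  · exact fun t ht => (hasDerivAt_gAux ht).differentiableAt.continuousAt.continuousWithinAt
  · rw [interior_Ioi]
    exact fun t ht => (hasDerivAt_gAux ht).differentiableAt.differentiableWithinAt
  · rw [interior_Ioi]
    intro t ht
    rw [(hasDerivAt_gAux ht).deriv]
    have h := Real.one_sub_inv_le_log_of_pos ht
    rw [div_eq_mul_inv]
    linarith

lemma hAux_one : hAux 1 = 0 := by unfold hAux; simp

lemma hAux_nonneg {t : ℝ} (ht : 0 < t) : 0 ≤ hAux t := by
  rcases le_or_gt 1 t with h | h
  · have mono : MonotoneOn hAux (Set.Ici 1) := by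
      apply monotoneOn_of_deriv_nonneg (convex_Ici 1)
      · exact fun x hx =>
          (hasDerivAt_hAux (lt_of_lt_of_le one_pos hx)).differentiableAt.continuousAt.continuousWithinAt
      · rw [interior_Ici]
        exact fun x hx => (hasDerivAt_hAux (lt_trans one_pos hx)).differentiableAt.differentiableWithinAt
      · rw [interior_Ici]
        intro x hx
        rw [(hasDerivAt_hAux (lt_trans one_pos hx)).deriv]
        have := gAux_mono (Set.mem_Ioi.2 one_pos) (Set.mem_Ioi.2 (lt_trans one_pos hx)) (le_of_lt hx)
        rw [gAux_one] at this
        exact this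
    have := mono (Set.mem_Ici.2 le_rfl) (Set.mem_Ici.2 h) h
    rw [hAux_one] at this
    exact this
  · have anti : AntitoneOn hAux (Set.Icc t 1) := by
      apply antitoneOn_of_deriv_nonpos (convex_Icc t 1)
      · exact fun x hx =>
          (hasDerivAt_hAux (lt_of_lt_of_le ht hx.1)).differentiableAt.continuousAt.continuousWithinAt
      · rw [interior_Icc]
        exact fun x hx => (hasDerivAt_hAux (lt_trans ht hx.1)).differentiableAt.differentiableWithinAt
      · rw [interior_Icc]
        intro x hx
        rw [(hasDerivAt_hAux (lt_trans ht hx.1)).deriv]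
        have := gAux_mono (Set.mem_Ioi.2 (lt_trans ht hx.1)) (Set.mem_Ioi.2 one_pos) (le_of_lt hx.2)
        rw [gAux_one] at this
        exact this
    have := anti (Set.mem_Icc.2 ⟨le_rfl, h.le⟩) (Set.mem_Icc.2 ⟨h.le, le_rfl⟩) h.le
    rw [hAux_one] at this
    exact this

lemma pinsker_pointwise {pk uk : ℝ} (hp : 0 ≤ pk) (hu : 0 < uk) :
    3*(pk-uk)^2 ≤ 2*(pk+2*uk)*(pk*Real.log (pk/uk) - pk + uk) := by
  rcases eq_or_lt_of_le hp with h | h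
  · rw [← h]
    simp
    nlinarith [hu]
  · have ht : 0 < pk/uk := div_pos h hu
    have h0 := hAux_nonneg ht
    unfold hAux at h0
    have hne : uk ≠ 0 := hu.ne'
    have expand : 2*(pk+2*uk)*(pk*Real.log (pk/uk) - pk + uk) - 3*(pk-uk)^2
        = uk^2 * (2*(pk/uk+2)*((pk/uk)*Real.log (pk/uk) - pk/uk + 1) - 3*(pk/uk-1)^2) := by
      field_simp
    nlinarith [mul_nonneg (sq_nonneg uk) h0, expand]

lemma pinsker_sum {P : ℕ} (p u : Fin P → ℝ) (hp0 : ∀ k, 0 ≤ p k) (hp1 : ∑ k, p k = 1)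
    (hu0 : ∀ k, 0 < u k) (hu1 : ∑ k, u k = 1) :
    (∑ k, |u k - p k|)^2 ≤ 2 * ∑ k, p k * Real.log (p k / u k) := by
  have hpos : ∀ k, (0:ℝ) < (p k + 2*u k)/3 := fun k => by
    have h1 := hp0 k; have h2 := hu0 k; positivity
  set f : Fin P → ℝ := fun k => Real.sqrt ((p k + 2*u k)/3) with hf
  have hfne : ∀ k, f k ≠ 0 := fun k => (Real.sqrt_pos.2 (hpos k)).ne'
  set g : Fin P → ℝ := fun k => |u k - p k| / f k with hg
  have cs := Finset.sum_mul_sq_le_sq_mul_sq Finset.univ f g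
  have hfg : ∀ k, f k * g k = |u k - p k| := by
    intro k
    rw [hg]
    field_simp
    rw [mul_comm, mul_div_assoc, div_self (hfne k), mul_one]
  have hf2 : ∑ k, f k ^ 2 = 1 := by
    have he : ∀ k, f k ^2 = (p k + 2*u k)/3 := fun k => Real.sq_sqrt (hpos k).le
    rw [Finset.sum_congr rfl fun k _ => he k, ← Finset.sum_div, Finset.sum_add_distrib,
      ← Finset.mul_sum, hp1, hu1]
    norm_num
  have hg2 : ∀ k, g k ^2 ≤ 2*(p k * Real.log (p k / u k) - p k + u k) := by
    intro k
    have key := pinsker_pointwise (hp0 k) (hu0 k)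
    have he : g k ^2 = (u k - p k)^2 / ((p k + 2*u k)/3) := by
      rw [hg, div_pow, sq_abs, hf, Real.sq_sqrt (hpos k).le]
    rw [he, div_le_iff₀ (hpos k)]
    nlinarith [key]
  calc (∑ k, |u k - p k|)^2 = (∑ k, f k * g k)^2 := by
        rw [Finset.sum_congr rfl fun k _ => (hfg k).symm]
    _ ≤ (∑ k, f k^2) * ∑ k, g k^2 := cs
    _ = ∑ k, g k ^2 := by rw [hf2, one_mul]
    _ ≤ ∑ k, 2*(p k * Real.log (p k / u k) - p k + u k) :=
        Finset.sum_le_sum (fun k _ => hg2 k)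
    _ = 2 * ∑ k, p k * Real.log (p k / u k) := by
        rw [← Finset.mul_sum]
        congr 1
        simp [Finset.sum_add_distrib, Finset.sum_sub_distrib, hp1, hu1]

/-- Action of a vector on the rows of a matrix: `(matVec x V) j = ∑ k, x k * V k j`. -/
def matVec {P d : ℕ} (x : Fin P → ℝ) (V : Fin P → Fin d → ℝ) : Fin d → ℝ :=
  fun j => ∑ k, x k * V k j

lemma matVec_diff_norm {P d : ℕ} (x y : Fin P → ℝ) (W : Fin P → Fin d → ℝ) (Bv : ℝ)
    (hBv : 0 ≤ Bv) (hW : ∀ k j, |W k j| ≤ Bv) :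
    ‖matVec x W - matVec y W‖ ≤ Bv * ∑ k, |x k - y k| := by
  have hC : 0 ≤ Bv * ∑ k, |x k - y k| :=
    mul_nonneg hBv (Finset.sum_nonneg fun k _ => abs_nonneg _)
  rw [pi_norm_le_iff_of_nonneg hC]
  intro j
  simp only [Pi.sub_apply, matVec, Real.norm_eq_abs, ← Finset.sum_sub_distrib]
  calc |∑ k, (x k * W k j - y k * W k j)| ≤ ∑ k, |x k * W k j - y k * W k j| :=
        Finset.abs_sum_le_sum_abs _ _
    _ ≤ ∑ k, |x k - y k| * Bv := by
        apply Finset.sum_le_sum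
        intro k _
        rw [← sub_mul, abs_mul]
        exact mul_le_mul_of_nonneg_left (hW k j) (abs_nonneg _)
    _ = Bv * ∑ k, |x k - y k| := by rw [← Finset.sum_mul, mul_comm]

lemma matVec_matdiff_norm {P d : ℕ} (x : Fin P → ℝ) (hx0 : ∀ k, 0 ≤ x k)
    (hx1 : ∑ k, x k = 1) (V W : Fin P → Fin d → ℝ) :
    ‖matVec x V - matVec x W‖ ≤ ‖V - W‖ := by
  rw [pi_norm_le_iff_of_nonneg (norm_nonneg _)]
  intro j
  simp only [Pi.sub_apply, matVec, Real.norm_eq_abs, ← Finset.sum_sub_distrib]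
  calc |∑ k, (x k * V k j - x k * W k j)| ≤ ∑ k, |x k * V k j - x k * W k j| :=
        Finset.abs_sum_le_sum_abs _ _
    _ ≤ ∑ k, x k * ‖V - W‖ := by
        apply Finset.sum_le_sum
        intro k _
        rw [← mul_sub, abs_mul, abs_of_nonneg (hx0 k)]
        apply mul_le_mul_of_nonneg_left _ (hx0 k)
        calc |V k j - W k j| = ‖(V - W) k j‖ := rfl
          _ ≤ ‖(V - W) k‖ := norm_le_pi_norm _ j
          _ ≤ ‖V - W‖ := norm_le_pi_norm _ k
    _ = ‖V - W‖ := by rw [← Finset.sum_mul, hx1, one_mul]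

/-- Theorem 3.1 (test-time error bound for mask substitution):
`err_test ≤ Lv·Lf·(εV + Bv·(εsam + 2√(2εcon))) + Lv·εsam + εf`. -/
theorem test_time_error_bound
    {P d m : ℕ} {Q I : Type*} [MeasurableSpace Q]
    (μ : Measure Q) [IsProbabilityMeasure μ]
    (iq : Q → I)
    (p u msk : Q → Fin P → ℝ)
    (V Vstar : Fin P → Fin d → ℝ)
    (f fstar : (Fin d → ℝ) → (Fin m → ℝ))
    (v : (Fin m → ℝ) → I → (Fin P → ℝ) → ℝ)
    (Lv Lf Bv εV εsam εcon εf : ℝ)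
    (hLv : 0 ≤ Lv) (hLf : 0 ≤ Lf) (hBv : 0 ≤ Bv)
    -- probability vectors: ground-truth mask p, softmax attention u (positive), SAM mask msk
    (hp0 : ∀ q k, 0 ≤ p q k) (hp1 : ∀ q, ∑ k, p q k = 1)
    (hu0 : ∀ q k, 0 < u q k) (hu1 : ∀ q, ∑ k, u q k = 1)
    (hm0 : ∀ q k, 0 ≤ msk q k) (hm1 : ∀ q, ∑ k, msk q k = 1)
    -- bounded value matrices
    (hV : ∀ k j, |V k j| ≤ Bv) (hVstar : ∀ k j, |Vstar k j| ≤ Bv)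
    -- Lipschitz maps f, f* (sup norms)
    (hf : ∀ x y, ‖f x - f y‖ ≤ Lf * ‖x - y‖)
    (hfstar : ∀ x y, ‖fstar x - fstar y‖ ≤ Lf * ‖x - y‖)
    -- value metric v is Lv-Lipschitz jointly in s (sup norm) and mask (ℓ1 norm)
    (hv : ∀ s s' i mm mm',
      |v s i mm - v s' i mm'| ≤ Lv * (‖s - s'‖ + ∑ k, |mm k - mm' k|))
    -- error quantities
    (hεsam : εsam = ∫ q, (∑ k, |msk q k - p q k|) ∂μ)
    (hεV : εV = ‖V - Vstar‖)
    (hεcon : εcon = ∫ q, (∑ k, p q k * Real.log (p q k / u q k)) ∂μ)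
    (hεf : εf = (∫ q, v (fstar (matVec (u q) V)) (iq q) (p q) ∂μ)
              - (∫ q, v (f (matVec (u q) V)) (iq q) (p q) ∂μ))
    -- integrability assumptions
    (hint1 : Integrable (fun q => v (fstar (matVec (p q) Vstar)) (iq q) (p q)) μ)
    (hint2 : Integrable (fun q => v (fstar (matVec (u q) Vstar)) (iq q) (p q)) μ)
    (hint3 : Integrable (fun q => v (fstar (matVec (u q) V)) (iq q) (p q)) μ)
    (hint4 : Integrable (fun q => v (f (matVec (u q) V)) (iq q) (p q)) μ)
    (hint5 : Integrable (fun q => v (f (matVec (u q) V)) (iq q) (msk q)) μ)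
    (hint6 : Integrable (fun q => v (f (matVec (msk q) V)) (iq q) (msk q)) μ)
    (hint7 : Integrable (fun q => ∑ k, |msk q k - p q k|) μ)
    (hint8 : Integrable (fun q => ∑ k, |u q k - p q k|) μ)
    (hint9 : Integrable (fun q => ∑ k, p q k * Real.log (p q k / u q k)) μ) :
    ∫ q, (v (fstar (matVec (p q) Vstar)) (iq q) (p q)
          - v (f (matVec (msk q) V)) (iq q) (msk q)) ∂μ
      ≤ Lv * Lf * (εV + Bv * (εsam + 2 * Real.sqrt (2 * εcon)))
        + Lv * εsam + εf := by
  -- Lipschitz helpers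
  have hvLip1 : ∀ (g : (Fin d → ℝ) → (Fin m → ℝ)),
      (∀ x y, ‖g x - g y‖ ≤ Lf * ‖x - y‖) → ∀ x y i mm,
      v (g x) i mm - v (g y) i mm ≤ Lv * (Lf * ‖x - y‖) := by
    intro g hg x y i mm
    have h1 := hv (g x) (g y) i mm mm
    simp only [sub_self, abs_zero, Finset.sum_const_zero, add_zero] at h1
    calc v (g x) i mm - v (g y) i mm ≤ |v (g x) i mm - v (g y) i mm| := le_abs_self _
      _ ≤ Lv * ‖g x - g y‖ := h1
      _ ≤ Lv * (Lf * ‖x - y‖) := mul_le_mul_of_nonneg_left (hg x y) hLv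
  have hvLip2 : ∀ s i mm mm', v s i mm - v s i mm' ≤ Lv * ∑ k, |mm k - mm' k| := by
    intro s i mm mm'
    have h1 := hv s s i mm mm'
    simp only [sub_self, norm_zero, zero_add] at h1
    exact le_trans (le_abs_self _) h1
  -- Pinsker and the attention-vs-truth L1 distance S
  set S : ℝ := ∫ q, (∑ k, |u q k - p q k|) ∂μ with hS
  have hKLpt : ∀ q, (∑ k, |u q k - p q k|)^2 ≤ 2 * ∑ k, p q k * Real.log (p q k / u q k) :=
    fun q => pinsker_sum (p q) (u q) (hp0 q) (hp1 q) (hu0 q) (hu1 q)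
  have hKL0 : ∀ q, 0 ≤ ∑ k, p q k * Real.log (p q k / u q k) := by
    intro q
    nlinarith [hKLpt q, sq_nonneg (∑ k, |u q k - p q k|)]
  have hεcon0 : 0 ≤ εcon := by
    rw [hεcon]
    exact integral_nonneg fun q => hKL0 q
  have hSc : ∀ c : ℝ, 0 < c → S ≤ εcon / c + c / 2 := by
    intro c hc
    have pt : ∀ q, (∑ k, |u q k - p q k|)
        ≤ (∑ k, p q k * Real.log (p q k / u q k))/c + c/2 := by
      intro q
      have h2 := hKLpt q
      have hX0 : 0 ≤ ∑ k, |u q k - p q k| := Finset.sum_nonneg fun k _ => abs_nonneg _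
      rw [div_add_div _ _ hc.ne' two_ne_zero, le_div_iff₀ (by positivity)]
      nlinarith [sq_nonneg ((∑ k, |u q k - p q k|) - c)]
    calc S ≤ ∫ q, ((∑ k, p q k * Real.log (p q k / u q k))/c + c/2) ∂μ :=
          integral_mono hint8 ((hint9.div_const c).add (integrable_const (c/2))) pt
      _ = εcon / c + c / 2 := by
          rw [integral_add (hint9.div_const c) (integrable_const _), integral_div,
            integral_const]
          simp [hεcon]
  have hS_le : S ≤ Real.sqrt (2 * εcon) := by
    rcases eq_or_lt_of_le hεcon0 with h | h
    · have hS0' : S ≤ 0 := by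
        apply le_of_forall_pos_le_add
        intro ε hε
        have := hSc ε hε
        rw [← h] at this
        simp at this
        linarith
      exact le_trans hS0' (Real.sqrt_nonneg _)
    · set c := Real.sqrt (2*εcon) with hcdef
      have hcpos : 0 < c := Real.sqrt_pos.2 (by linarith)
      have hc2 : c * c = 2*εcon := by
        rw [← sq]
        exact Real.sq_sqrt (by linarith)
      have hb := hSc c hcpos
      have he : εcon / c = c / 2 := by
        rw [div_eq_div_iff hcpos.ne' (by norm_num : (2:ℝ) ≠ 0)]
        linarith
      linarith
  -- pointwise difference bounds
  have h12 : ∀ q, v (fstar (matVec (p q) Vstar)) (iq q) (p q)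
      - v (fstar (matVec (u q) Vstar)) (iq q) (p q)
      ≤ Lv*Lf*Bv * ∑ k, |u q k - p q k| := by
    intro q
    have h1 := hvLip1 fstar hfstar (matVec (p q) Vstar) (matVec (u q) Vstar) (iq q) (p q)
    have hn := matVec_diff_norm (p q) (u q) Vstar Bv hBv hVstar
    have hswap : (∑ k, |p q k - u q k|) = ∑ k, |u q k - p q k| :=
      Finset.sum_congr rfl fun k _ => abs_sub_comm _ _
    calc _ ≤ Lv * (Lf * ‖matVec (p q) Vstar - matVec (u q) Vstar‖) := h1
      _ ≤ Lv * (Lf * (Bv * ∑ k, |p q k - u q k|)) :=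
          mul_le_mul_of_nonneg_left (mul_le_mul_of_nonneg_left hn hLf) hLv
      _ = Lv*Lf*Bv * ∑ k, |u q k - p q k| := by rw [hswap]; ring
  have h23 : ∀ q, v (fstar (matVec (u q) Vstar)) (iq q) (p q)
      - v (fstar (matVec (u q) V)) (iq q) (p q) ≤ Lv*Lf*εV := by
    intro q
    have h1 := hvLip1 fstar hfstar (matVec (u q) Vstar) (matVec (u q) V) (iq q) (p q)
    have hn : ‖matVec (u q) Vstar - matVec (u q) V‖ ≤ εV := by
      rw [hεV, norm_sub_rev V Vstar]
      exact matVec_matdiff_norm (u q) (fun k => (hu0 q k).le) (hu1 q) Vstar V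
    calc _ ≤ Lv * (Lf * ‖matVec (u q) Vstar - matVec (u q) V‖) := h1
      _ ≤ Lv * (Lf * εV) := mul_le_mul_of_nonneg_left (mul_le_mul_of_nonneg_left hn hLf) hLv
      _ = Lv*Lf*εV := by ring
  have h45 : ∀ q, v (f (matVec (u q) V)) (iq q) (p q)
      - v (f (matVec (u q) V)) (iq q) (msk q) ≤ Lv * ∑ k, |msk q k - p q k| := by
    intro q
    have h1 := hvLip2 (f (matVec (u q) V)) (iq q) (p q) (msk q)
    have hswap : (∑ k, |p q k - msk q k|) = ∑ k, |msk q k - p q k| :=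
      Finset.sum_congr rfl fun k _ => abs_sub_comm _ _
    rw [hswap] at h1
    exact h1
  have h56 : ∀ q, v (f (matVec (u q) V)) (iq q) (msk q)
      - v (f (matVec (msk q) V)) (iq q) (msk q)
      ≤ Lv*Lf*Bv * ((∑ k, |u q k - p q k|) + (∑ k, |msk q k - p q k|)) := by
    intro q
    have h1 := hvLip1 f hf (matVec (u q) V) (matVec (msk q) V) (iq q) (msk q)
    have hn := matVec_diff_norm (u q) (msk q) V Bv hBv hV
    have htri : (∑ k, |u q k - msk q k|)
        ≤ (∑ k, |u q k - p q k|) + (∑ k, |msk q k - p q k|) := by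
      rw [← Finset.sum_add_distrib]
      apply Finset.sum_le_sum
      intro k _
      calc |u q k - msk q k| ≤ |u q k - p q k| + |p q k - msk q k| := abs_sub_le _ _ _
        _ = |u q k - p q k| + |msk q k - p q k| := by rw [abs_sub_comm (p q k)]
    calc _ ≤ Lv * (Lf * ‖matVec (u q) V - matVec (msk q) V‖) := h1
      _ ≤ Lv * (Lf * (Bv * ∑ k, |u q k - msk q k|)) :=
          mul_le_mul_of_nonneg_left (mul_le_mul_of_nonneg_left hn hLf) hLv
      _ ≤ Lv * (Lf * (Bv * ((∑ k, |u q k - p q k|) + (∑ k, |msk q k - p q k|)))) := by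
          apply mul_le_mul_of_nonneg_left _ hLv
          apply mul_le_mul_of_nonneg_left _ hLf
          exact mul_le_mul_of_nonneg_left htri hBv
      _ = Lv*Lf*Bv * ((∑ k, |u q k - p q k|) + (∑ k, |msk q k - p q k|)) := by ring
  -- integrated bounds
  have J1 : (∫ q, v (fstar (matVec (p q) Vstar)) (iq q) (p q) ∂μ)
      - (∫ q, v (fstar (matVec (u q) Vstar)) (iq q) (p q) ∂μ) ≤ Lv*Lf*Bv * S := by
    rw [← integral_sub hint1 hint2]
    calc _ ≤ ∫ q, (Lv*Lf*Bv * ∑ k, |u q k - p q k|) ∂μ :=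
          integral_mono (hint1.sub hint2) (hint8.const_mul _) h12
      _ = Lv*Lf*Bv * S := by rw [integral_const_mul]
  have J2 : (∫ q, v (fstar (matVec (u q) Vstar)) (iq q) (p q) ∂μ)
      - (∫ q, v (fstar (matVec (u q) V)) (iq q) (p q) ∂μ) ≤ Lv*Lf*εV := by
    rw [← integral_sub hint2 hint3]
    calc _ ≤ ∫ _q, (Lv*Lf*εV) ∂μ :=
          integral_mono (hint2.sub hint3) (integrable_const _) h23
      _ = Lv*Lf*εV := by simp
  have J4 : (∫ q, v (f (matVec (u q) V)) (iq q) (p q) ∂μ)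
      - (∫ q, v (f (matVec (u q) V)) (iq q) (msk q) ∂μ) ≤ Lv * εsam := by
    rw [← integral_sub hint4 hint5]
    calc _ ≤ ∫ q, (Lv * ∑ k, |msk q k - p q k|) ∂μ :=
          integral_mono (hint4.sub hint5) (hint7.const_mul _) h45
      _ = Lv * εsam := by rw [integral_const_mul, ← hεsam]
  have J5 : (∫ q, v (f (matVec (u q) V)) (iq q) (msk q) ∂μ)
      - (∫ q, v (f (matVec (msk q) V)) (iq q) (msk q) ∂μ) ≤ Lv*Lf*Bv * (S + εsam) := by
    rw [← integral_sub hint5 hint6]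
    calc _ ≤ ∫ q, (Lv*Lf*Bv * ((∑ k, |u q k - p q k|) + (∑ k, |msk q k - p q k|))) ∂μ :=
          integral_mono (hint5.sub hint6) ((hint8.add hint7).const_mul _) h56
      _ = Lv*Lf*Bv * (S + εsam) := by
          rw [integral_const_mul, integral_add hint8 hint7, ← hεsam]
  -- combine
  rw [integral_sub hint1 hint6]
  have hLLB : 0 ≤ Lv*Lf*Bv := by positivity
  have hfin := mul_le_mul_of_nonneg_left hS_le hLLB
  nlinarith [J1, J2, J4, J5, hεf, hfin]
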